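/- Let G be a finite group whose Sylow p-subgroup is abelian, and let H be a normal p-subgroup of G. Then N(G) = N(H ⋊ G/H), where H ⋊ G/H is the semidirect product with respect to the natural conjugation action of G/H on H. -/

import Mathlib

/-!
Common definitions: the set `N(G)` of conjugacy class sizes, `A`-groups,
the largest `p`-power `|G||_p` dividing an element of `N(G)`, the Fitting subgroup,
and the natural conjugation action of `G ⧸ H` on an abelian normal subgroup `H`
(used to form the semidirect product `H ⋊ G/H`).
-/

/-- `N(G)`: the set of conjugacy class sizes (indices of centralizers) of `G`. -/
def indexSet (G : Type*) [Group G] : Set ℕ :=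
  {n | ∃ x : G, n = (Subgroup.centralizer {x}).index}

/-- A finite group is an `A`-group if all its Sylow subgroups are abelian. -/
def IsAGroup (G : Type*) [Group G] : Prop :=
  ∀ (p : ℕ), p.Prime → ∀ P : Sylow p G, ∀ a b : (P : Subgroup G), a * b = b * a

/-- `|G||_p`: the highest power of `p` dividing some element of `N(G)`. -/
noncomputable def maxPPart (G : Type*) [Group G] (p : ℕ) : ℕ :=
  sSup {m | (∃ k : ℕ, m = p ^ k) ∧ ∃ n ∈ indexSet G, m ∣ n}

open scoped Classical in
/-- The natural action of `G ⧸ H` on an abelian normal subgroup `H`, induced by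
conjugation (`h ↦ g * h * g⁻¹`); it is used to form the semidirect product `H ⋊ G/H`.
(Junk value — the trivial action — if `H` is not abelian; see `quotConj_eq` below.) -/
noncomputable def quotConj (G : Type*) [Group G] (H : Subgroup G) [H.Normal] :
    G ⧸ H →* MulAut ↥H :=
  if h : H ≤ (MulAut.conjNormal (H := H)).ker then
    QuotientGroup.lift H MulAut.conjNormal h
  else 1

/-- When `H` is abelian, `quotConj` is indeed the conjugation action `h ↦ g * h * g⁻¹`. -/
theorem quotConj_eq (G : Type*) [Group G] (H : Subgroup G) [H.Normal]
    (hab : ∀ a b : ↥H, a * b = b * a) (g : G) :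
    quotConj G H (g : G ⧸ H) = MulAut.conjNormal g := by
  have hker : H ≤ (MulAut.conjNormal (H := H)).ker := by
    intro x hx
    rw [MonoidHom.mem_ker]
    ext y
    have h2 : x * (y : G) = (y : G) * x := congrArg Subtype.val (hab ⟨x, hx⟩ y)
    simp only [MulAut.conjNormal_apply, MulAut.one_apply]
    rw [mul_inv_eq_iff_eq_mul]
    exact h2
  rw [quotConj, dif_pos hker]
  rfl

/-- The Fitting subgroup: the join of all normal nilpotent subgroups. -/
def fitting (G : Type*) [Group G] : Subgroup G :=
  ⨆ H ∈ {H : Subgroup G | H.Normal ∧ Group.IsNilpotent ↥H}, H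

instance fitting_normal (G : Type*) [Group G] : (fitting G).Normal := by
  constructor
  intro n hn g
  rw [fitting, iSup_subtype'] at hn ⊢
  refine Subgroup.iSup_induction _
    (C := fun x => g * x * g⁻¹ ∈
      ⨆ H : {H : Subgroup G | H.Normal ∧ Group.IsNilpotent ↥H}, (H : Subgroup G))
    hn (fun H x hx => ?_) ?_ (fun x y hx hy => ?_)
  · exact Subgroup.mem_iSup_of_mem H (H.2.1.conj_mem x hx g)
  · simpa using Subgroup.one_mem _
  · have h2 := Subgroup.mul_mem _ hx hy
    have h3 : g * (x * y) * g⁻¹ = (g * x * g⁻¹) * (g * y * g⁻¹) := by group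
    show g * (x * y) * g⁻¹ ∈ _
    rwa [h3]

section Stmt8Aux

variable {p : ℕ} {G : Type*} [Group G]

/-- auxiliary subgroup S_x -/
def cobS (H : Subgroup G) (x : G) : Subgroup G :=
  Subgroup.closure {c | ∃ k ∈ H, c = k * (x * k⁻¹ * x⁻¹)}

lemma cobS_le (H : Subgroup G) [H.Normal] (x : G) : cobS H x ≤ H := by
  apply (Subgroup.closure_le _).mpr
  rintro c ⟨k, hk, rfl⟩
  exact H.mul_mem hk (by simpa using Subgroup.Normal.conj_mem ‹H.Normal› _ (H.inv_mem hk) x)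

lemma mem_cobS_gen (H : Subgroup G) (x : G) {k : G} (hk : k ∈ H) :
    k * (x * k⁻¹ * x⁻¹) ∈ cobS H x :=
  Subgroup.subset_closure ⟨k, hk, rfl⟩

lemma mem_cobS_gen' (H : Subgroup G) (x : G) {k : G} (hk : k ∈ H) :
    (x * k * x⁻¹) * k⁻¹ ∈ cobS H x := by
  have := (cobS H x).inv_mem (mem_cobS_gen H x hk)
  simpa [mul_assoc] using this

lemma mem_cobS_iff (H : Subgroup G) [H.Normal] (x : G)
    (hab : ∀ a b : G, a ∈ H → b ∈ H → a * b = b * a) {c : G} :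
    c ∈ cobS H x ↔ ∃ k ∈ H, c = k * (x * k⁻¹ * x⁻¹) := by
  constructor
  · intro hc
    refine Subgroup.closure_induction (fun c hc => hc) ⟨1, H.one_mem, by simp⟩ ?_ ?_ hc
    · rintro a b _ _ ⟨k₁, hk₁, rfl⟩ ⟨k₂, hk₂, rfl⟩
      refine ⟨k₁ * k₂, H.mul_mem hk₁ hk₂, ?_⟩
      have m1 : x * k₁⁻¹ * x⁻¹ ∈ H := by
        simpa using Subgroup.Normal.conj_mem ‹H.Normal› _ (H.inv_mem hk₁) x
      have m2 : x * k₂⁻¹ * x⁻¹ ∈ H := by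
        simpa using Subgroup.Normal.conj_mem ‹H.Normal› _ (H.inv_mem hk₂) x
      have e1 : (x * k₁⁻¹ * x⁻¹) * k₂ = k₂ * (x * k₁⁻¹ * x⁻¹) := hab _ _ m1 hk₂
      have e2 : (x * k₁⁻¹ * x⁻¹) * (x * k₂⁻¹ * x⁻¹) = (x * k₂⁻¹ * x⁻¹) * (x * k₁⁻¹ * x⁻¹) :=
        hab _ _ m1 m2
      have : x * (k₁ * k₂)⁻¹ * x⁻¹ = (x * k₂⁻¹ * x⁻¹) * (x * k₁⁻¹ * x⁻¹) := by group
      rw [this]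
      calc k₁ * (x * k₁⁻¹ * x⁻¹) * (k₂ * (x * k₂⁻¹ * x⁻¹))
          = k₁ * ((x * k₁⁻¹ * x⁻¹) * k₂) * (x * k₂⁻¹ * x⁻¹) := by group
        _ = k₁ * (k₂ * (x * k₁⁻¹ * x⁻¹)) * (x * k₂⁻¹ * x⁻¹) := by rw [e1]
        _ = k₁ * k₂ * ((x * k₁⁻¹ * x⁻¹) * (x * k₂⁻¹ * x⁻¹)) := by group
        _ = k₁ * k₂ * ((x * k₂⁻¹ * x⁻¹) * (x * k₁⁻¹ * x⁻¹)) := by rw [e2]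
    · rintro a _ ⟨k, hk, rfl⟩
      refine ⟨k⁻¹, H.inv_mem hk, ?_⟩
      have m1 : x * k * x⁻¹ ∈ H := by simpa using Subgroup.Normal.conj_mem ‹H.Normal› _ hk x
      have e1 : (x * k * x⁻¹) * k⁻¹ = k⁻¹ * (x * k * x⁻¹) := hab _ _ m1 (H.inv_mem hk)
      calc (k * (x * k⁻¹ * x⁻¹))⁻¹ = (x * k * x⁻¹) * k⁻¹ := by group
        _ = k⁻¹ * (x * k * x⁻¹) := e1
        _ = k⁻¹ * (x * (k⁻¹)⁻¹ * x⁻¹) := by group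
  · rintro ⟨k, hk, rfl⟩; exact mem_cobS_gen H x hk
variable {G : Type*} [Group G]

-- conjugation on H depends only on the coset mod H
lemma conjH_coset (H : Subgroup G) (hab : ∀ a b : G, a ∈ H → b ∈ H → a * b = b * a)
    [H.Normal] {k a : G} (hk : k ∈ H) (ha : a ∈ H) (x : G) :
    (k * x) * a * (k * x)⁻¹ = x * a * x⁻¹ := by
  have m1 : x * a * x⁻¹ ∈ H := by simpa using Subgroup.Normal.conj_mem ‹H.Normal› _ ha x
  have e1 : k * (x * a * x⁻¹) = (x * a * x⁻¹) * k := hab _ _ hk m1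
  calc (k * x) * a * (k * x)⁻¹ = k * (x * a * x⁻¹) * k⁻¹ := by group
    _ = (x * a * x⁻¹) * k * k⁻¹ := by rw [e1]
    _ = x * a * x⁻¹ := by group

lemma cobS_coset (H : Subgroup G) (hab : ∀ a b : G, a ∈ H → b ∈ H → a * b = b * a)
    [H.Normal] {k : G} (hk : k ∈ H) (x : G) : cobS H (k * x) = cobS H x := by
  unfold cobS
  congr 1
  ext c
  constructor
  · rintro ⟨k₂, hk₂, rfl⟩
    exact ⟨k₂, hk₂, by rw [show (k*x) * k₂⁻¹ * (k*x)⁻¹ = x * k₂⁻¹ * x⁻¹ from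
      conjH_coset H hab hk (H.inv_mem hk₂) x]⟩
  · rintro ⟨k₂, hk₂, rfl⟩
    exact ⟨k₂, hk₂, by rw [show (k*x) * k₂⁻¹ * (k*x)⁻¹ = x * k₂⁻¹ * x⁻¹ from
      conjH_coset H hab hk (H.inv_mem hk₂) x]⟩

-- elements y with [y,x] ∈ H normalize cobS H x
lemma conj_cobS (H : Subgroup G) (hab : ∀ a b : G, a ∈ H → b ∈ H → a * b = b * a)
    [H.Normal] {x y c : G} (hy : y * x * y⁻¹ * x⁻¹ ∈ H) (hc : c ∈ cobS H x) :
    y * c * y⁻¹ ∈ cobS H x := by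
  obtain ⟨k, hk, rfl⟩ := (mem_cobS_iff H x hab).mp hc
  have hk' : y * k * y⁻¹ ∈ H := Subgroup.Normal.conj_mem ‹H.Normal› _ hk y
  have key : y * (k * (x * k⁻¹ * x⁻¹)) * y⁻¹
      = (y * k * y⁻¹) * (((y*x*y⁻¹*x⁻¹) * x) * (y * k * y⁻¹)⁻¹ * ((y*x*y⁻¹*x⁻¹) * x)⁻¹) := by
    group
  rw [key, conjH_coset H hab hy (H.inv_mem hk') x]
  exact mem_cobS_gen H x hk'


-- elements of any p-subgroup commute, given abelian Sylow p-subgroups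
lemma aux_pcomm (hSyl : ∀ P : Sylow p G, ∀ a b : ↥(P : Subgroup G), a * b = b * a)
    {K : Subgroup G} (hK : IsPGroup p K) {a b : G} (ha : a ∈ K) (hb : b ∈ K) :
    a * b = b * a := by
  obtain ⟨P, hle⟩ := hK.exists_le_sylow
  have := hSyl P ⟨a, hle ha⟩ ⟨b, hle hb⟩
  exact congrArg Subtype.val this

lemma zpowers_isPGroup {y : G} (hy : ∃ k, y ^ p ^ k = 1) :
    IsPGroup p (Subgroup.zpowers y) := by
  obtain ⟨k, hk⟩ := hy
  rintro ⟨g, hg⟩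
  obtain ⟨n, rfl⟩ := Subgroup.mem_zpowers_iff.mp hg
  refine ⟨k, ?_⟩
  have : ((y ^ n) ^ p ^ k : G) = 1 := by
    rw [← zpow_natCast (y ^ n), ← zpow_mul, mul_comm, zpow_mul, zpow_natCast, hk, one_zpow]
  exact Subtype.ext (by simpa using this)

-- p-elements commute with every element of a normal p-subgroup
lemma pelem_comm_H (hSyl : ∀ P : Sylow p G, ∀ a b : ↥(P : Subgroup G), a * b = b * a)
    (H : Subgroup G) [H.Normal] (hHp : IsPGroup p H)
    {y : G} (hy : ∃ k, y ^ p ^ k = 1) {h : G} (hh : h ∈ H) : y * h = h * y := by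
  have hsup : IsPGroup p (Subgroup.zpowers y ⊔ H : Subgroup G) :=
    IsPGroup.to_sup_of_normal_right (zpowers_isPGroup hy) hHp
  exact aux_pcomm hSyl hsup (Subgroup.mem_sup_left (Subgroup.mem_zpowers y))
    (Subgroup.mem_sup_right hh)

-- closure of two commuting p-elements consists of p-elements
lemma closure_pair_pelem {a b : G} (hcomm : a * b = b * a)
    (ha : ∃ k, a ^ p ^ k = 1) (hb : ∃ k, b ^ p ^ k = 1) :
    ∀ t ∈ Subgroup.closure ({a, b} : Set G), ∃ k, t ^ p ^ k = 1 := by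
  obtain ⟨ka, hka⟩ := ha
  obtain ⟨kb, hkb⟩ := hb
  have hC : Commute a b := hcomm
  have hrep : ∀ t ∈ Subgroup.closure ({a, b} : Set G), ∃ i j : ℤ, t = a ^ i * b ^ j := by
    intro t ht
    refine Subgroup.closure_induction ?_ ⟨0, 0, by simp⟩ ?_ ?_ ht
    · rintro c (rfl | rfl)
      · exact ⟨1, 0, by simp⟩
      · exact ⟨0, 1, by simp⟩
    · rintro s t _ _ ⟨i, j, rfl⟩ ⟨i', j', rfl⟩
      refine ⟨i + i', j + j', ?_⟩
      have h1 : b ^ j * a ^ i' = a ^ i' * b ^ j := (hC.symm.zpow_zpow j i')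
      rw [zpow_add, zpow_add]
      calc a ^ i * b ^ j * (a ^ i' * b ^ j') = a ^ i * (b ^ j * a ^ i') * b ^ j' := by group
        _ = a ^ i * (a ^ i' * b ^ j) * b ^ j' := by rw [h1]
        _ = a ^ i * a ^ i' * (b ^ j * b ^ j') := by group
    · rintro s _ ⟨i, j, rfl⟩
      refine ⟨-i, -j, ?_⟩
      have h1 : Commute (a ^ i) (b ^ j) := hC.zpow_zpow i j
      rw [mul_inv_rev, zpow_neg, zpow_neg]
      exact ((h1.inv_inv).symm.eq)
  intro t ht
  obtain ⟨i, j, rfl⟩ := hrep t ht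
  refine ⟨ka + kb, ?_⟩
  have h1 : Commute (a ^ i) (b ^ j) := hC.zpow_zpow i j
  rw [h1.mul_pow]
  have e1 : (a ^ i) ^ p ^ (ka + kb) = 1 := by
    rw [← zpow_natCast (a ^ i), ← zpow_mul, mul_comm, zpow_mul, zpow_natCast, pow_add,
      pow_mul, hka, one_pow, one_zpow]
  have e2 : (b ^ j) ^ p ^ (ka + kb) = 1 := by
    rw [← zpow_natCast (b ^ j), ← zpow_mul, mul_comm, zpow_mul, zpow_natCast, pow_add,
      mul_comm (p ^ ka), pow_mul, hkb, one_pow, one_zpow]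
  rw [e1, e2, one_mul]


open commutatorElement in
lemma stepA (hp : p.Prime) [Finite G]
    (hSyl : ∀ P : Sylow p G, ∀ a b : ↥(P : Subgroup G), a * b = b * a)
    (H : Subgroup G) [H.Normal] (hHp : IsPGroup p H)
    (hab : ∀ a b : G, a ∈ H → b ∈ H → a * b = b * a)
    (x y : G) (hy : ∃ k, y ^ p ^ k = 1) (hc : y * x * y⁻¹ * x⁻¹ ∈ H) :
    y * x * y⁻¹ * x⁻¹ ∈ cobS H x := by
  set c := y * x * y⁻¹ * x⁻¹ with hcdef
  have claim : ∀ n : ℕ, (y * x ^ n * y⁻¹ * (x ^ n)⁻¹) * (c ^ n)⁻¹ ∈ cobS H x := by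
    intro n
    induction n with
    | zero => simpa using (cobS H x).one_mem
    | succ n ih =>
      have hsS : (y * x ^ n * y⁻¹ * (x ^ n)⁻¹) * (c ^ n)⁻¹ ∈ cobS H x := ih
      set s := (y * x ^ n * y⁻¹ * (x ^ n)⁻¹) * (c ^ n)⁻¹ with hsdef
      have hsH : s ∈ H := cobS_le H x hsS
      have hcn : c ^ n ∈ H := H.pow_mem hc n
      have h1 : x * s * x⁻¹ ∈ cobS H x := conj_cobS H hab (by simpa using H.one_mem) hsS
      have h2 : (x * c ^ n * x⁻¹) * (c ^ n)⁻¹ ∈ cobS H x := mem_cobS_gen' H x hcn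
      have hw : (x * s * x⁻¹) * ((x * c ^ n * x⁻¹) * (c ^ n)⁻¹) ∈ cobS H x := mul_mem h1 h2
      have hwH : (x * s * x⁻¹) * ((x * c ^ n * x⁻¹) * (c ^ n)⁻¹) ∈ H := cobS_le H x hw
      have hA : y * x ^ (n+1) * y⁻¹ * (x ^ (n+1))⁻¹
          = c * (x * (y * x ^ n * y⁻¹ * (x ^ n)⁻¹) * x⁻¹) := by
        rw [hcdef]; group
      have hAs : y * x ^ n * y⁻¹ * (x ^ n)⁻¹ = s * c ^ n := by rw [hsdef]; group
      have e : (y * x ^ (n+1) * y⁻¹ * (x ^ (n+1))⁻¹) * (c ^ (n+1))⁻¹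
          = c * ((x * s * x⁻¹) * ((x * c ^ n * x⁻¹) * (c ^ n)⁻¹)) * c⁻¹ := by
        rw [hA, hAs]; group
      rw [e, show c * ((x * s * x⁻¹) * ((x * c ^ n * x⁻¹) * (c ^ n)⁻¹)) * c⁻¹
          = (x * s * x⁻¹) * ((x * c ^ n * x⁻¹) * (c ^ n)⁻¹) from by
        rw [hab c _ hc hwH]; group]
      exact hw
  -- p'-part exponent
  have hfin : (0:ℕ) < orderOf x := orderOf_pos x
  set o := orderOf x with ho
  set v := o.factorization p with hv
  set m := o / p ^ v with hm
  have hmdvd : m ∣ o := Nat.ordCompl_dvd o p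
  have hpm : ¬ p ∣ m := Nat.not_dvd_ordCompl hp hfin.ne'
  have hxm : (x ^ m) ^ p ^ v = 1 := by
    have h3 : orderOf (x ^ m) = p ^ v := by
      rw [orderOf_pow, Nat.gcd_eq_right hmdvd]
      exact Nat.div_div_self (Nat.ordProj_dvd o p) hfin.ne'
    rw [← h3]; exact pow_orderOf_eq_one _
  -- commutator with x^m lies in H
  have hAm : y * x ^ m * y⁻¹ * (x ^ m)⁻¹ ∈ H := by
    have h4 := H.mul_mem (cobS_le H x (claim m)) (H.pow_mem hc m)
    simpa [mul_assoc] using h4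
  -- commuting p-elements in the quotient
  have hqcomm : ((y : G ⧸ H)) * ((x ^ m : G) : G ⧸ H) = ((x ^ m : G) : G ⧸ H) * (y : G ⧸ H) := by
    have h5 : ((y * x ^ m * y⁻¹ * (x ^ m)⁻¹ : G) : G ⧸ H) = 1 :=
      (QuotientGroup.eq_one_iff _).mpr hAm
    have h6 : ⁅(y : G ⧸ H), ((x ^ m : G) : G ⧸ H)⁆ = 1 := by
      rw [commutatorElement_def]; exact_mod_cast h5
    exact (commutatorElement_eq_one_iff_commute.mp h6).eq
  obtain ⟨ky, hky⟩ := hy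
  have hyq : ∃ k, ((y : G ⧸ H)) ^ p ^ k = 1 :=
    ⟨ky, by rw [← QuotientGroup.mk_pow, hky, QuotientGroup.mk_one]⟩
  have hxmq : ∃ k, (((x ^ m : G) : G ⧸ H)) ^ p ^ k = 1 :=
    ⟨v, by rw [← QuotientGroup.mk_pow, hxm, QuotientGroup.mk_one]⟩
  -- the closure of y and x^m in G is a p-group
  have hT : IsPGroup p (Subgroup.closure ({y, x ^ m} : Set G)) := by
    rintro ⟨t, ht⟩
    have himg : ((t : G) : G ⧸ H) ∈
        Subgroup.closure ({(y : G ⧸ H), ((x ^ m : G) : G ⧸ H)} : Set (G ⧸ H)) := by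
      have h7 : (QuotientGroup.mk' H) t ∈
          Subgroup.map (QuotientGroup.mk' H) (Subgroup.closure ({y, x ^ m} : Set G)) :=
        Subgroup.mem_map_of_mem _ ht
      rwa [MonoidHom.map_closure, Set.image_pair] at h7
    obtain ⟨k1, hk1⟩ := closure_pair_pelem hqcomm hyq hxmq _ himg
    have h8 : t ^ p ^ k1 ∈ H := by
      rw [← QuotientGroup.eq_one_iff]
      exact_mod_cast hk1
    obtain ⟨k2, hk2⟩ := hHp ⟨t ^ p ^ k1, h8⟩
    refine ⟨k1 + k2, ?_⟩
    have h9 : (t : G) ^ p ^ (k1 + k2) = 1 := by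
      have := congrArg Subtype.val hk2
      push_cast at this
      rw [pow_add, pow_mul]
      exact this
    exact Subtype.ext (by push_cast; exact h9)
  -- abelian Sylow => y and x^m commute in G
  have hyx : y * x ^ m = x ^ m * y :=
    aux_pcomm hSyl hT (Subgroup.subset_closure (by simp))
      (Subgroup.subset_closure (by simp))
  have hAm1 : y * x ^ m * y⁻¹ * (x ^ m)⁻¹ = 1 := by rw [hyx]; group
  have hcm : c ^ m ∈ cobS H x := by
    have h10 := claim m
    rw [hAm1, one_mul] at h10
    simpa using (cobS H x).inv_mem h10
  -- descend from c^m to c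
  obtain ⟨kc, hkc⟩ := hHp ⟨c, hc⟩
  have hcp : c ^ p ^ kc = 1 := by
    have := congrArg Subtype.val hkc; push_cast at this; exact this
  by_cases hone : p ^ kc = 1
  · have : c = 1 := by rw [← pow_one c, ← hone, hcp]
    rw [this]; exact (cobS H x).one_mem
  · have hlt : 1 < p ^ kc := lt_of_le_of_ne (Nat.one_le_pow _ _ hp.pos) (Ne.symm hone)
    have hco : Nat.Coprime m (p ^ kc) :=
      (((Nat.Prime.coprime_iff_not_dvd hp).mpr hpm).pow_left kc).symm
    obtain ⟨u, -, hu⟩ := Nat.exists_mul_mod_eq_one_of_coprime hco hlt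
    have hcu : c = (c ^ m) ^ u := by
      rw [← pow_mul]
      have hdm := Nat.div_add_mod (m * u) (p ^ kc)
      calc c = c ^ (m * u % p ^ kc) := by rw [hu, pow_one]
        _ = (c ^ p ^ kc) ^ (m * u / p ^ kc) * c ^ (m * u % p ^ kc) := by rw [hcp]; simp
        _ = c ^ (p ^ kc * (m * u / p ^ kc) + m * u % p ^ kc) := by rw [pow_add, pow_mul]
        _ = c ^ (m * u) := by rw [hdm]
    rw [hcu]
    exact pow_mem hcm u

lemma commutator_mem_iff (H : Subgroup G) [H.Normal] (y x : G) :
    y * x * y⁻¹ * x⁻¹ ∈ H ↔ ((y : G ⧸ H) * (x : G ⧸ H) = (x : G ⧸ H) * (y : G ⧸ H)) := by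
  rw [← QuotientGroup.eq_one_iff]
  simp only [QuotientGroup.mk_mul, QuotientGroup.mk_inv]
  rw [mul_inv_eq_one, mul_inv_eq_iff_eq_mul]

lemma mainB (hp : p.Prime) [Finite G]
    (hSyl : ∀ P : Sylow p G, ∀ a b : ↥(P : Subgroup G), a * b = b * a)
    (H : Subgroup G) [H.Normal] (hHp : IsPGroup p H)
    (hab : ∀ a b : G, a ∈ H → b ∈ H → a * b = b * a)
    (x : G) :
    ∃ h ∈ H, ∀ y : G, y * x * y⁻¹ * x⁻¹ ∈ H →
      (y * x * y⁻¹ * x⁻¹) * ((y * h * y⁻¹) * h⁻¹)⁻¹ ∈ cobS H x := by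
  classical
  haveI := Fact.mk hp
  letI : CommGroup ↥H :=
    { (inferInstance : Group ↥H) with mul_comm := fun a b => Subtype.ext (hab _ _ a.2 b.2) }
  set D : Subgroup G :=
    (Subgroup.centralizer {((x : G) : G ⧸ H)}).comap (QuotientGroup.mk' H) with hD
  have memD : ∀ y : G, y ∈ D ↔ y * x * y⁻¹ * x⁻¹ ∈ H := by
    intro y
    rw [hD, Subgroup.mem_comap, QuotientGroup.mk'_apply,
      Subgroup.mem_centralizer_singleton_iff, commutator_mem_iff H y x]
  have hδmem : ∀ y : ↥D, (y : G) * x * (y : G)⁻¹ * x⁻¹ ∈ H := fun y => (memD _).mp y.2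
  set δ : ↥D → ↥H := fun y => ⟨(y : G) * x * (y : G)⁻¹ * x⁻¹, hδmem y⟩ with hδ
  have κmem : ∀ (y : ↥D) (a : ↥H), (y : G) * (a : G) * (y : G)⁻¹ ∈ H :=
    fun y a => Subgroup.Normal.conj_mem ‹H.Normal› _ a.2 _
  set κ : ↥D → ↥H →* ↥H := fun y =>
    { toFun := fun a => ⟨(y : G) * (a : G) * (y : G)⁻¹, κmem y a⟩
      map_one' := Subtype.ext (by simp)
      map_mul' := fun a b => Subtype.ext (by push_cast; group) } with hκ
  have cocycle : ∀ a c : ↥D,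
      ((δ (a * c) : ↥H) : G) = ((a : G) * ((δ c : ↥H) : G) * (a : G)⁻¹) * ((δ a : ↥H) : G) := by
    intro a c
    show ((a * c : ↥D) : G) * x * ((a * c : ↥D) : G)⁻¹ * x⁻¹ = ((a : G) * ((c : G) * x * (c : G)⁻¹ * x⁻¹) * (a : G)⁻¹) * ((a : G) * x * (a : G)⁻¹ * x⁻¹)
    push_cast
    group
  obtain ⟨R⟩ : Nonempty (Sylow p ↥D) := Sylow.nonempty
  set E : Subgroup ↥D := H.subgroupOf D ⊔ (R : Subgroup ↥D) with hE
  have hδS : ∀ e : ↥D, e ∈ E → ((δ e : ↥H) : G) ∈ cobS H x := by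
    intro e he
    have he' : e ∈ ((H.subgroupOf D ⊔ (R : Subgroup ↥D) : Subgroup ↥D) : Set ↥D) := he
    rw [Subgroup.normal_mul] at he'
    obtain ⟨h₀, hh₀, r, hr, hmul⟩ := he'
    have hrp : ∃ k, (r : G) ^ p ^ k = 1 := by
      obtain ⟨k, hk⟩ := R.2 ⟨r, hr⟩
      refine ⟨k, ?_⟩
      have h1 := congrArg (Subtype.val) hk
      have h2 := congrArg (Subtype.val) h1
      push_cast at h2
      exact h2
    have hδr : ((δ r : ↥H) : G) ∈ cobS H x :=
      stepA hp hSyl H hHp hab x (r : G) hrp (hδmem r)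
    have hδh₀ : ((δ h₀ : ↥H) : G) ∈ cobS H x := by
      show (h₀ : G) * x * (h₀ : G)⁻¹ * x⁻¹ ∈ cobS H x
      have := mem_cobS_gen H x (Subgroup.mem_subgroupOf.mp hh₀)
      simpa [mul_assoc] using this
    have hconj : (h₀ : G) * ((δ r : ↥H) : G) * (h₀ : G)⁻¹ ∈ cobS H x :=
      conj_cobS H hab ((memD _).mp h₀.2) hδr
    rw [← hmul, cocycle h₀ r]
    exact mul_mem hconj hδh₀
  set Ω := ↥D ⧸ E with hΩ
  haveI : Fintype Ω := Fintype.ofFinite _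
  set b : ↥H := ∏ q : Ω, δ q.out with hb
  set m : ℕ := E.index with hm
  have hcardΩ : Fintype.card Ω = m := by
    rw [hm, Subgroup.index, Nat.card_eq_fintype_card]
  have key : ∀ y : ↥D, (κ y b) * (δ y) ^ m * b⁻¹ ∈ (cobS H x).subgroupOf H := by
    intro y
    have hptwise : ∀ q : Ω,
        ((κ y (δ q.out)) * (δ y) * (δ ((y • q).out))⁻¹ : ↥H) ∈ (cobS H x).subgroupOf H := by
      intro q
      have h1 : (QuotientGroup.mk ((y • q).out) : Ω) = y • q := QuotientGroup.out_eq' _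
      have h2 : (QuotientGroup.mk (y * q.out) : Ω) = y • q := by
        rw [← smul_eq_mul, MulAction.Quotient.mk_smul_out]
      have he : ((y • q).out)⁻¹ * (y * q.out) ∈ E := QuotientGroup.eq.mp (h1.trans h2.symm)
      set t' : ↥D := (y • q).out with ht'
      set e : ↥D := t'⁻¹ * (y * q.out) with hedef
      have hfact : y * q.out = t' * e := by rw [hedef]; group
      have hδe : ((δ e : ↥H) : G) ∈ cobS H x := hδS e he
      have ht'S : (t' : G) * ((δ e : ↥H) : G) * (t' : G)⁻¹ ∈ cobS H x :=
        conj_cobS H hab ((memD _).mp t'.2) hδe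
      rw [Subgroup.mem_subgroupOf]
      have h4 : ((y : G) * ((δ q.out : ↥H) : G) * (y : G)⁻¹) * ((δ y : ↥H) : G)
          = ((t' : G) * ((δ e : ↥H) : G) * (t' : G)⁻¹) * ((δ t' : ↥H) : G) := by
        rw [← cocycle y q.out, ← cocycle t' e, hfact]
      have hcoe : ((κ y (δ q.out) * δ y * (δ t')⁻¹ : ↥H) : G)
          = (t' : G) * ((δ e : ↥H) : G) * (t' : G)⁻¹ := by
        have h5 : ((κ y (δ q.out) : ↥H) : G) = (y : G) * ((δ q.out : ↥H) : G) * (y : G)⁻¹ := rfl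
        have h6 := congrArg (fun z => z * (((δ t' : ↥H) : G))⁻¹) h4
        simp only [mul_inv_cancel_right] at h6
        simp only [MulMemClass.coe_mul, InvMemClass.coe_inv]
        rw [h5]
        exact h6
      rw [hcoe]
      exact ht'S
    have hprod := Subgroup.prod_mem ((cobS H x).subgroupOf H)
      (fun q (_ : q ∈ Finset.univ) => hptwise q)
    have h7 : (∏ q : Ω, κ y (δ q.out)) = κ y b := by
      rw [hb]; exact (map_prod (κ y) _ _).symm
    have h8 : (∏ q : Ω, (δ ((y • q).out))⁻¹) = ∏ q : Ω, (δ q.out)⁻¹ :=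
      Equiv.prod_comp (MulAction.toPerm y) (fun q : Ω => (δ q.out)⁻¹)
    have heq : (∏ q : Ω, (κ y (δ q.out) * δ y * (δ ((y • q).out))⁻¹))
        = κ y b * (δ y) ^ m * b⁻¹ := by
      rw [Finset.prod_mul_distrib, Finset.prod_mul_distrib, Finset.prod_const,
        Finset.card_univ, hcardΩ, h7, h8, ← Finset.prod_inv_distrib]
    rwa [heq] at hprod
  have hpm : ¬ p ∣ m := by
    intro hdvd
    have h1 : E.index ∣ (R : Subgroup ↥D).index := Subgroup.index_dvd_of_le le_sup_right
    exact Sylow.not_dvd_index R (hdvd.trans h1)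
  by_cases hcard : Nat.card ↥H = 1
  · -- trivial H
    haveI : Subsingleton ↥H := (Nat.card_eq_one_iff_unique.mp hcard).1
    refine ⟨1, H.one_mem, ?_⟩
    intro y hy
    have h1 : (⟨y * x * y⁻¹ * x⁻¹, hy⟩ : ↥H) = (1 : ↥H) := Subsingleton.elim _ _
    have h2 : y * x * y⁻¹ * x⁻¹ = 1 := congrArg Subtype.val h1
    rw [h2]
    simpa using (cobS H x).one_mem
  · have hlt : 1 < Nat.card ↥H :=
      lt_of_le_of_ne Nat.card_pos (Ne.symm hcard)
    have hco : Nat.Coprime m (Nat.card ↥H) := by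
      obtain ⟨n, hn⟩ := IsPGroup.exists_card_eq hHp
      rw [hn]
      exact (((hp.coprime_iff_not_dvd).mpr hpm).pow_left n).symm
    obtain ⟨u, -, hu⟩ := Nat.exists_mul_mod_eq_one_of_coprime hco hlt
    set hstar : ↥H := (b ^ u)⁻¹ with hhs
    refine ⟨(hstar : G), hstar.2, ?_⟩
    intro y hy
    have hyD : y ∈ D := (memD y).mpr hy
    set y' : ↥D := ⟨y, hyD⟩ with hy'
    have hkey := key y'
    have hdy : (δ y') ^ (m * u) = δ y' := by
      have hdm := Nat.div_add_mod (m * u) (Nat.card ↥H)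
      calc (δ y') ^ (m * u) = (δ y') ^ (Nat.card ↥H * (m * u / Nat.card ↥H) + m * u % Nat.card ↥H) := by
            rw [hdm]
        _ = ((δ y') ^ Nat.card ↥H) ^ (m * u / Nat.card ↥H) * (δ y') ^ (m * u % Nat.card ↥H) := by
            rw [pow_add, pow_mul]
        _ = δ y' := by rw [pow_card_eq_one', hu, pow_one, one_pow, one_mul]
    -- final identity
    have e2 : ((κ y' hstar) * hstar⁻¹)⁻¹ = (κ y' b) ^ u * (b ^ u)⁻¹ := by
      rw [hhs, map_inv, map_pow, inv_inv, mul_inv, inv_inv]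
    have hfinal : δ y' * ((κ y' hstar) * hstar⁻¹)⁻¹ = (κ y' b * (δ y') ^ m * b⁻¹) ^ u := by
      calc δ y' * ((κ y' hstar) * hstar⁻¹)⁻¹
          = δ y' * ((κ y' b) ^ u * (b ^ u)⁻¹) := by rw [e2]
        _ = ((δ y') ^ m) ^ u * ((κ y' b) ^ u * (b ^ u)⁻¹) := by rw [← pow_mul, hdy]
        _ = (κ y' b * (δ y') ^ m * b⁻¹) ^ u := by
            rw [mul_pow, mul_pow, inv_pow, ← mul_assoc,
              mul_comm (((δ y') ^ m) ^ u) ((κ y' b) ^ u)]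
    have hmem : δ y' * ((κ y' hstar) * hstar⁻¹)⁻¹ ∈ (cobS H x).subgroupOf H := by
      rw [hfinal]
      exact pow_mem hkey u
    rw [Subgroup.mem_subgroupOf] at hmem
    have hcoe2 : ((δ y' * ((κ y' hstar) * hstar⁻¹)⁻¹ : ↥H) : G)
        = (y * x * y⁻¹ * x⁻¹) * ((y * (hstar : G) * y⁻¹) * (hstar : G)⁻¹)⁻¹ := rfl
    rwa [hcoe2] at hmem


lemma abel_swap {G : Type*} [Group G] (H : Subgroup G)
    (hab : ∀ a b : G, a ∈ H → b ∈ H → a * b = b * a)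
    {h k a b : G} (ha : a ∈ H) (hb : b ∈ H)
    (heq : h * a⁻¹ = k * b⁻¹) : k * a = h * b := by
  calc k * a = (k * b⁻¹) * (b * a) := by group
    _ = (h * a⁻¹) * (b * a) := by rw [heq]
    _ = h * (a⁻¹ * b) * a := by group
    _ = h * (b * a⁻¹) * a := by rw [hab _ _ (H.inv_mem ha) hb]
    _ = h * b := by group

lemma card_eq_ker_mul_range {A B : Type*} [Group A] [Group B] [Finite A] (f : A →* B) :
    Nat.card A = Nat.card f.ker * Nat.card f.range := by
  rw [Subgroup.card_eq_card_quotient_mul_card_subgroup f.ker,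
    Nat.card_congr (QuotientGroup.quotientKerEquivRange f).toEquiv, Nat.mul_comm]

lemma cardCent {G : Type*} [Group G] [Finite G]
    (H : Subgroup G) [H.Normal]
    (hab : ∀ a b : G, a ∈ H → b ∈ H → a * b = b * a)
    (x h : G) (hh : h ∈ H)
    (hmatch : ∀ y : G, y * x * y⁻¹ * x⁻¹ ∈ H →
      (y * x * y⁻¹ * x⁻¹) * ((y * h * y⁻¹) * h⁻¹)⁻¹ ∈ cobS H x) :
    Nat.card (Subgroup.centralizer {x}) =
      Nat.card (Subgroup.centralizer
        {(⟨⟨h, hh⟩, (x : G ⧸ H)⟩ : SemidirectProduct ↥H (G ⧸ H) (quotConj G H))}) := by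
  classical
  have hab' : ∀ a b : ↥H, a * b = b * a := fun a b => Subtype.ext (hab _ _ a.2 b.2)
  have hφ : ∀ (y : G) (a : ↥H), ((quotConj G H ((y : G) : G ⧸ H)) a : G) = y * (a : G) * y⁻¹ :=
    fun y a => by rw [quotConj_eq G H hab' y]; exact MulAut.conjNormal_apply y a
  haveI hfinΓ : Finite (SemidirectProduct ↥H (G ⧸ H) (quotConj G H)) :=
    Finite.of_injective (fun g => (g.left, g.right))
      (fun a b hab2 => SemidirectProduct.ext (congrArg Prod.fst hab2) (congrArg Prod.snd hab2))
  set γ : SemidirectProduct ↥H (G ⧸ H) (quotConj G H) := ⟨⟨h, hh⟩, (x : G ⧸ H)⟩ with hγ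
  have hcentΓ : ∀ (k : ↥H) (r : G ⧸ H),
      (⟨k, r⟩ : SemidirectProduct ↥H (G ⧸ H) (quotConj G H)) ∈ Subgroup.centralizer {γ}
      ↔ ((k * (quotConj G H r) ⟨h, hh⟩ = ⟨h, hh⟩ * (quotConj G H ((x : G) : G ⧸ H)) k)
          ∧ r * ((x : G) : G ⧸ H) = ((x : G) : G ⧸ H) * r) := by
    intro k r
    rw [Subgroup.mem_centralizer_singleton_iff, hγ]
    constructor
    · intro hmul
      exact ⟨by have := congrArg SemidirectProduct.left hmul; simpa using this,
             by have := congrArg SemidirectProduct.right hmul; simpa using this⟩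
    · rintro ⟨h1, h2⟩
      exact SemidirectProduct.ext (by simpa using h1) (by simpa using h2)
  set f₁ := (QuotientGroup.mk' H).comp (Subgroup.centralizer {x}).subtype with hf₁
  set f₂ := SemidirectProduct.rightHom.comp (Subgroup.centralizer {γ}).subtype with hf₂
  rw [card_eq_ker_mul_range f₁, card_eq_ker_mul_range f₂]
  -- kernel elements of f₁ lie in H
  have toH : ∀ z : ↥f₁.ker, ((z : ↥(Subgroup.centralizer {x})) : G) ∈ H := by
    rintro ⟨⟨z, hzc⟩, hzk⟩
    have h1 : ((z : G) : G ⧸ H) = 1 := hzk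
    exact (QuotientGroup.eq_one_iff _).mp h1
  have toC : ∀ z : ↥f₁.ker,
      (⟨⟨((z : ↥(Subgroup.centralizer {x})) : G), toH z⟩, 1⟩ :
        SemidirectProduct ↥H (G ⧸ H) (quotConj G H)) ∈ Subgroup.centralizer {γ} := by
    intro z
    set k : G := ((z : ↥(Subgroup.centralizer {x})) : G) with hk
    have hzc : k * x = x * k := Subgroup.mem_centralizer_singleton_iff.mp (z : ↥(Subgroup.centralizer {x})).2
    refine (hcentΓ ⟨k, toH z⟩ 1).mpr ⟨?_, by rw [one_mul, mul_one]⟩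
    refine Subtype.ext ?_
    push_cast
    rw [show ((quotConj G H (1 : G ⧸ H)) ⟨h, hh⟩ : G) = h from by rw [map_one]; rfl]
    rw [hφ x ⟨k, toH z⟩]
    have e1 : x * k * x⁻¹ = k := by rw [← hzc]; group
    rw [e1]
    exact hab _ _ (toH z) hh
  have fromC : ∀ w : ↥f₂.ker,
      (((w : ↥(Subgroup.centralizer {γ})) : SemidirectProduct ↥H (G ⧸ H) (quotConj G H)).left : G)
        ∈ Subgroup.centralizer {x} := by
    rintro ⟨⟨w, hwc⟩, hwk⟩
    have hr : w.right = 1 := hwk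
    have hcc := (hcentΓ w.left w.right).mp hwc
    obtain ⟨hl, -⟩ := hcc
    rw [hr] at hl
    have hl' := congrArg Subtype.val hl
    push_cast at hl'
    rw [show ((quotConj G H (1 : G ⧸ H)) ⟨h, hh⟩ : G) = h from by rw [map_one]; rfl] at hl'
    rw [hφ x w.left] at hl'
    -- hl' : ↑w.left * h = h * (x * ↑w.left * x⁻¹)
    have hcomm : (w.left : G) * h = h * (w.left : G) := hab _ _ w.left.2 hh
    have e2 : x * (w.left : G) * x⁻¹ = (w.left : G) := by
      have := hl'.symm.trans hcomm
      exact mul_left_cancel this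
    rw [Subgroup.mem_centralizer_singleton_iff]
    calc (w.left : G) * x = (x * (w.left : G) * x⁻¹) * x := by rw [e2]
      _ = x * (w.left : G) := by group
  have hkerCard : Nat.card f₁.ker = Nat.card f₂.ker := by
    refine Nat.card_congr
      { toFun := fun z => ⟨⟨⟨⟨((z : ↥(Subgroup.centralizer {x})) : G), toH z⟩, 1⟩, toC z⟩, rfl⟩
        invFun := fun w => ⟨⟨(((w : ↥(Subgroup.centralizer {γ})) :
            SemidirectProduct ↥H (G ⧸ H) (quotConj G H)).left : G), fromC w⟩, ?_⟩
        left_inv := ?_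
        right_inv := ?_ }
    · show ((((w : ↥(Subgroup.centralizer {γ})) :
          SemidirectProduct ↥H (G ⧸ H) (quotConj G H)).left : G) : G ⧸ H) = 1
      exact (QuotientGroup.eq_one_iff _).mpr
        ((w : ↥(Subgroup.centralizer {γ})).val.left.2)
    · intro z
      exact Subtype.ext (Subtype.ext rfl)
    · intro w
      refine Subtype.ext (Subtype.ext (SemidirectProduct.ext (Subtype.ext rfl) ?_))
      exact (MonoidHom.mem_ker.mp w.prop).symm
  rw [hkerCard]
  congr 1
  -- range equality
  have hrange : f₁.range = f₂.range := by
    ext r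
    simp only [MonoidHom.mem_range]
    constructor
    · rintro ⟨z, rfl⟩
      set y : G := (z : G) with hy
      have hzc : y * x = x * y := Subgroup.mem_centralizer_singleton_iff.mp z.2
      have hc1 : y * x * y⁻¹ * x⁻¹ = 1 := by rw [hzc]; group
      have hm := hmatch y (by rw [hc1]; exact H.one_mem)
      rw [hc1, one_mul] at hm
      have hm' : h * (y * h⁻¹ * y⁻¹) ∈ cobS H x := by
        have e3 : ((y * h * y⁻¹) * h⁻¹)⁻¹ = h * (y * h⁻¹ * y⁻¹) := by group
        rwa [e3] at hm
      obtain ⟨k, hk, hkeq⟩ := (mem_cobS_iff H x hab).mp hm'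
      have hyh : y * h⁻¹ * y⁻¹ ∈ H := Subgroup.Normal.conj_mem ‹H.Normal› _ (H.inv_mem hh) y
      have hxk : x * k⁻¹ * x⁻¹ ∈ H := Subgroup.Normal.conj_mem ‹H.Normal› _ (H.inv_mem hk) x
      -- derive the centralizing identity: k * (y*h*y⁻¹) = h * (x*k*x⁻¹)
      have hyh' : y * h * y⁻¹ ∈ H := Subgroup.Normal.conj_mem ‹H.Normal› _ hh y
      have hxk' : x * k * x⁻¹ ∈ H := Subgroup.Normal.conj_mem ‹H.Normal› _ hk x
      have hiden : k * (y * h * y⁻¹) = h * (x * k * x⁻¹) := by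
        refine abel_swap H hab hyh' hxk' ?_
        rw [show (y * h * y⁻¹)⁻¹ = y * h⁻¹ * y⁻¹ from by group,
          show (x * k * x⁻¹)⁻¹ = x * k⁻¹ * x⁻¹ from by group]
        exact hkeq
      refine ⟨⟨⟨⟨k, hk⟩, ((y : G) : G ⧸ H)⟩, ?_⟩, ?_⟩
      · refine (hcentΓ ⟨k, hk⟩ _).mpr ⟨?_, ?_⟩
        · refine Subtype.ext ?_
          push_cast
          rw [hφ y ⟨h, hh⟩, hφ x ⟨k, hk⟩]
          exact hiden
        · rw [← QuotientGroup.mk_mul, ← QuotientGroup.mk_mul, hzc]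
      · rfl
    · rintro ⟨w, rfl⟩
      obtain ⟨y, hyq⟩ := QuotientGroup.mk'_surjective H
        ((w : SemidirectProduct ↥H (G ⧸ H) (quotConj G H)).right)
      have hwc := (hcentΓ (w : SemidirectProduct ↥H (G ⧸ H) (quotConj G H)).left
        (w : SemidirectProduct ↥H (G ⧸ H) (quotConj G H)).right).mp w.2
      obtain ⟨hl, hr⟩ := hwc
      set k : G := ((w : SemidirectProduct ↥H (G ⧸ H) (quotConj G H)).left : G) with hkdef
      have hkH : k ∈ H := (w : SemidirectProduct ↥H (G ⧸ H) (quotConj G H)).left.2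
      rw [← hyq] at hl hr
      have hcH : y * x * y⁻¹ * x⁻¹ ∈ H := (commutator_mem_iff H y x).mpr hr
      have hl' := congrArg Subtype.val hl
      push_cast at hl'
      rw [show ((quotConj G H ((QuotientGroup.mk' H) y)) ⟨h, hh⟩ : G) = y * h * y⁻¹ from
        hφ y ⟨h, hh⟩] at hl'
      rw [show ((quotConj G H ((x : G) : G ⧸ H))
          (w : SemidirectProduct ↥H (G ⧸ H) (quotConj G H)).left : G) = x * k * x⁻¹ from
        hφ x _] at hl'
      -- hl' : k * (y * h * y⁻¹) = h * (x * k * x⁻¹)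
      have hyh' : y * h * y⁻¹ ∈ H := Subgroup.Normal.conj_mem ‹H.Normal› _ hh y
      have hxk' : x * k * x⁻¹ ∈ H := Subgroup.Normal.conj_mem ‹H.Normal› _ hkH x
      have hrev : h * (y * h⁻¹ * y⁻¹) = k * (x * k⁻¹ * x⁻¹) := by
        have hstep : h * (y * h * y⁻¹)⁻¹ = k * (x * k * x⁻¹)⁻¹ :=
          abel_swap H hab (H.inv_mem hyh') (H.inv_mem hxk') (by simpa [inv_inv] using hl')
        rw [show (y * h * y⁻¹)⁻¹ = y * h⁻¹ * y⁻¹ from by group,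
          show (x * k * x⁻¹)⁻¹ = x * k⁻¹ * x⁻¹ from by group] at hstep
        exact hstep
      have hβ : h * (y * h⁻¹ * y⁻¹) ∈ cobS H x := by
        rw [hrev]; exact mem_cobS_gen H x hkH
      have hm := hmatch y hcH
      have hcy : y * x * y⁻¹ * x⁻¹ ∈ cobS H x := by
        have e7 : y * x * y⁻¹ * x⁻¹
            = (y * x * y⁻¹ * x⁻¹) * ((y * h * y⁻¹) * h⁻¹)⁻¹ * ((y * h * y⁻¹) * h⁻¹) := by group
        have e8 : (y * h * y⁻¹) * h⁻¹ = (h * (y * h⁻¹ * y⁻¹))⁻¹ := by group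
        rw [e7]
        exact mul_mem hm (by rw [e8]; exact inv_mem hβ)
      obtain ⟨k₂, hk₂, hk₂eq⟩ := (mem_cobS_iff H x hab).mp hcy
      have hzc2 : (k₂⁻¹ * y) * x = x * (k₂⁻¹ * y) := by
        have h9 : y * x = (k₂ * (x * k₂⁻¹ * x⁻¹)) * (x * y) := by
          rw [← hk₂eq]; group
        calc (k₂⁻¹ * y) * x = k₂⁻¹ * (y * x) := by group
          _ = k₂⁻¹ * ((k₂ * (x * k₂⁻¹ * x⁻¹)) * (x * y)) := by rw [h9]
          _ = x * (k₂⁻¹ * y) := by group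
      refine ⟨⟨k₂⁻¹ * y, Subgroup.mem_centralizer_singleton_iff.mpr hzc2⟩, ?_⟩
      show ((k₂⁻¹ * y : G) : G ⧸ H) = _
      rw [QuotientGroup.mk_mul]
      rw [show ((k₂⁻¹ : G) : G ⧸ H) = 1 from (QuotientGroup.eq_one_iff _).mpr (H.inv_mem hk₂)]
      rw [one_mul]
      exact hyq
  rw [hrange]


theorem stmt_8_aux (p : ℕ) (hp : p.Prime) (G : Type*) [Group G] [Finite G]
    (hSyl : ∀ P : Sylow p G, ∀ a b : ↥(P : Subgroup G), a * b = b * a)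
    (H : Subgroup G) [H.Normal] (hHp : IsPGroup p ↥H) :
    indexSet G = indexSet (SemidirectProduct ↥H (G ⧸ H) (quotConj G H)) := by
  classical
  have hab : ∀ a b : G, a ∈ H → b ∈ H → a * b = b * a :=
    fun a b ha hb => aux_pcomm hSyl hHp ha hb
  haveI hfinΓ : Finite (SemidirectProduct ↥H (G ⧸ H) (quotConj G H)) :=
    Finite.of_injective (fun g => (g.left, g.right))
      (fun a b h2 => SemidirectProduct.ext (congrArg Prod.fst h2) (congrArg Prod.snd h2))
  have hcardΓ : Nat.card (SemidirectProduct ↥H (G ⧸ H) (quotConj G H)) = Nat.card G := by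
    have e : SemidirectProduct ↥H (G ⧸ H) (quotConj G H) ≃ ↥H × (G ⧸ H) :=
      ⟨fun g => (g.left, g.right), fun pr => ⟨pr.1, pr.2⟩, fun g => rfl, fun pr => rfl⟩
    rw [Nat.card_congr e, Nat.card_prod,
      Subgroup.card_eq_card_quotient_mul_card_subgroup H, Nat.mul_comm]
  ext n
  simp only [indexSet, Set.mem_setOf_eq]
  constructor
  · rintro ⟨x, rfl⟩
    obtain ⟨h, hh, hmatch⟩ := mainB hp hSyl H hHp hab x
    refine ⟨⟨⟨h, hh⟩, ((x : G) : G ⧸ H)⟩, ?_⟩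
    have hcent := cardCent H hab x h hh hmatch
    have h1 := Subgroup.card_mul_index (Subgroup.centralizer {x})
    have h2 := Subgroup.card_mul_index (Subgroup.centralizer
      {(⟨⟨h, hh⟩, ((x : G) : G ⧸ H)⟩ : SemidirectProduct ↥H (G ⧸ H) (quotConj G H))})
    rw [hcardΓ, ← hcent] at h2
    exact Nat.eq_of_mul_eq_mul_left Nat.card_pos (h1.trans h2.symm)
  · rintro ⟨w, rfl⟩
    obtain ⟨xq, hxq⟩ := QuotientGroup.mk'_surjective H w.right
    obtain ⟨hs, hhs, hmatch⟩ := mainB hp hSyl H hHp hab xq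
    have hkH : (w.left : G) ∈ H := w.left.2
    have hw0 : (w.left : G) * hs⁻¹ ∈ H := H.mul_mem hkH (H.inv_mem hhs)
    set g : G := ((w.left : G) * hs⁻¹) * xq with hg
    have hSg : cobS H g = cobS H xq := by rw [hg]; exact cobS_coset H hab hw0 xq
    have hmg : ∀ y : G, y * g * y⁻¹ * g⁻¹ ∈ H →
        (y * g * y⁻¹ * g⁻¹) * ((y * (w.left : G) * y⁻¹) * (w.left : G)⁻¹)⁻¹ ∈ cobS H g := by
      intro y hyg
      have hA : y * ((w.left : G) * hs⁻¹) * y⁻¹ ∈ H :=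
        Subgroup.Normal.conj_mem ‹H.Normal› _ hw0 y
      have hcx : y * xq * y⁻¹ * xq⁻¹ ∈ H := by
        have e1 : y * xq * y⁻¹ * xq⁻¹
            = (y * ((w.left : G) * hs⁻¹) * y⁻¹)⁻¹ * (y * g * y⁻¹ * g⁻¹) * ((w.left : G) * hs⁻¹) := by
          rw [hg]; group
        rw [e1]
        exact H.mul_mem (H.mul_mem (H.inv_mem hA) hyg) hw0
      have hm := hmatch y hcx
      have hAx : (y * ((w.left : G) * hs⁻¹) * y⁻¹) * xq *
          (y * ((w.left : G) * hs⁻¹) * y⁻¹)⁻¹ * xq⁻¹ ∈ H := by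
        have e2 : (y * ((w.left : G) * hs⁻¹) * y⁻¹) * xq *
            (y * ((w.left : G) * hs⁻¹) * y⁻¹)⁻¹ * xq⁻¹
            = (y * ((w.left : G) * hs⁻¹) * y⁻¹) *
              (xq * (y * ((w.left : G) * hs⁻¹) * y⁻¹)⁻¹ * xq⁻¹) := by group
        rw [e2]
        exact H.mul_mem hA (Subgroup.Normal.conj_mem ‹H.Normal› _ (H.inv_mem hA) xq)
      have egoal : (y * g * y⁻¹ * g⁻¹) * ((y * (w.left : G) * y⁻¹) * (w.left : G)⁻¹)⁻¹
          = (y * ((w.left : G) * hs⁻¹) * y⁻¹) *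
            ((y * xq * y⁻¹ * xq⁻¹) * ((y * hs * y⁻¹) * hs⁻¹)⁻¹) *
            (y * ((w.left : G) * hs⁻¹) * y⁻¹)⁻¹ := by
        rw [hg]; group
      rw [hSg, egoal]
      exact conj_cobS H hab hAx hm
    have hcent := cardCent H hab g (w.left : G) hkH hmg
    have hwid : (⟨⟨(w.left : G), hkH⟩, ((g : G) : G ⧸ H)⟩ :
        SemidirectProduct ↥H (G ⧸ H) (quotConj G H)) = w := by
      refine SemidirectProduct.ext (Subtype.ext rfl) ?_
      show ((g : G) : G ⧸ H) = w.right
      rw [hg, QuotientGroup.mk_mul,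
        show ((((w.left : G) * hs⁻¹ : G)) : G ⧸ H) = 1 from
          (QuotientGroup.eq_one_iff _).mpr hw0, one_mul]
      exact hxq
    rw [hwid] at hcent
    refine ⟨g, ?_⟩
    have h1 := Subgroup.card_mul_index (Subgroup.centralizer {g})
    have h2 := Subgroup.card_mul_index (Subgroup.centralizer {w})
    rw [hcardΓ, ← hcent] at h2
    exact (Nat.eq_of_mul_eq_mul_left Nat.card_pos (h1.trans h2.symm)).symm

end Stmt8Aux

/-- Let `G` be a finite group whose Sylow `p`-subgroups are abelian and `H`
a normal `p`-subgroup of `G`. Then `N(G) = N(H ⋊ G/H)` for the natural conjugation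
action of `G/H` on `H` (which is well defined since such an `H` is abelian). -/
theorem stmt_8 (p : ℕ) (hp : p.Prime) (G : Type*) [Group G] [Finite G]
    (hSyl : ∀ P : Sylow p G, ∀ a b : ↥(P : Subgroup G), a * b = b * a)
    (H : Subgroup G) [H.Normal] (hHp : IsPGroup p ↥H) :
    indexSet G = indexSet (SemidirectProduct ↥H (G ⧸ H) (quotConj G H)) :=
  stmt_8_aux p hp G hSyl H hHp
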